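/- Let P' be a standard-graded polynomial ring over a field k with maximal homogeneous ideal M', and let B' be an M'-primary homogeneous ideal of P'. Suppose the top degree of P'/B' (the largest d with [P'/B']_d ≠ 0) is strictly less than the maximal degree of a minimal homogeneous generator of B'. Then (B' :_{P'} M') ≠ (M'·B' :_{P'} M'). -/

import Mathlib

open MvPolynomial

/-- Lemma 3.8: Let `B'` be an `M'`-primary homogeneous ideal of a standard-graded
polynomial ring `P' = k[x₁,…,xₙ]` with irrelevant maximal ideal `M'`.  If the top degree `d`
of `P'/B'` is strictly smaller than the maximal generator degree of `B'` (i.e. `B'` has a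
minimal generator of degree `> d`), then `(B' : M') ≠ (M'B' : M')`. -/
theorem colon_ne_colon_of_topDegree_lt_maxGenDegree
    (k : Type*) [Field k] (n : ℕ) (B' : Ideal (MvPolynomial (Fin n) k))
    (M' : Ideal (MvPolynomial (Fin n) k)) (hM' : M' = Ideal.span (Set.range X))
    -- `B'` is homogeneous:
    (hhom : ∀ f ∈ B', ∀ e : ℕ, (homogeneousComponent e f) ∈ B')
    -- `B'` is `M'`-primary:
    (hBM : B' ≤ M') (hprim : ∃ m : ℕ, M' ^ m ≤ B')
    -- `d` is the top degree of `P'/B'`: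
    (d : ℕ) (htop : ∃ f : MvPolynomial (Fin n) k, f.IsHomogeneous d ∧ f ∉ B')
    (htop' : ∀ (e : ℕ) (f : MvPolynomial (Fin n) k), d < e → f.IsHomogeneous e → f ∈ B')
    -- `B'` has a minimal generator of degree `> d`:
    (hgen : ∃ (e : ℕ) (f : MvPolynomial (Fin n) k),
      d < e ∧ f.IsHomogeneous e ∧ f ∈ B' ∧ f ∉ M' * B') :
    Submodule.colon (B' : Submodule (MvPolynomial (Fin n) k) (MvPolynomial (Fin n) k)) M' ≠
      Submodule.colon ((M' * B' : Ideal (MvPolynomial (Fin n) k)) :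
        Submodule (MvPolynomial (Fin n) k) (MvPolynomial (Fin n) k)) M' := by
  intro heq
  obtain ⟨e, f, hde, hfe, hfB, hfMB⟩ := hgen
  apply hfMB
  -- write f as a sum of its monomials
  rw [f.as_sum]
  apply Ideal.sum_mem
  intro m hm
  have hcoeff : coeff m f ≠ 0 := mem_support_iff.mp hm
  have hdeg : m.degree = e := by
    have := hfe hcoeff
    rw [Finsupp.degree_eq_weight_one]; exact this
  -- m is nonzero, pick a variable i with m i ≥ 1
  have hmne : m ≠ 0 := by
    intro h0
    rw [h0] at hdeg
    simp [map_zero] at hdeg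
    omega
  obtain ⟨i, hi⟩ := Finsupp.ne_iff.mp hmne
  simp only [Finsupp.coe_zero, Pi.zero_apply] at hi
  have hi1 : 1 ≤ m i := Nat.one_le_iff_ne_zero.mpr hi
  set m' : Fin n →₀ ℕ := m - Finsupp.single i 1 with hm'
  have hle : Finsupp.single i 1 ≤ m := by
    rw [Finsupp.single_le_iff]; exact hi1
  have hadd : m' + Finsupp.single i 1 = m := tsub_add_cancel_of_le hle
  have hm'deg : m'.degree + 1 = e := by
    have h1 : (m' + Finsupp.single i 1).degree = m'.degree + (Finsupp.single i 1).degree := by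
      simp [Finsupp.degree_eq_weight_one, map_add]
    have h2 : (Finsupp.single i (1:ℕ)).degree = 1 := by
      exact Finsupp.degree_single _ _
    rw [hadd, hdeg, h2] at h1
    omega
  set h : MvPolynomial (Fin n) k := monomial m' (coeff m f) with hh
  have hhhom : h.IsHomogeneous m'.degree := isHomogeneous_monomial _ rfl
  have hXiM : (X i : MvPolynomial (Fin n) k) ∈ M' := by
    rw [hM']; exact Ideal.subset_span ⟨i, rfl⟩
  have hsplit : (monomial m (coeff m f) : MvPolynomial (Fin n) k) = h * X i := by
    rw [hh, X, monomial_mul, hadd, mul_one]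
  rw [hsplit]
  rcases lt_or_eq_of_le (Nat.lt_succ_iff.mp (by omega : d < m'.degree + 1)) with hlt | heqd
  · -- m'.degree > d : h ∈ B', so h * X i ∈ B' * M' ⊆ M' * B'
    have hhB : h ∈ B' := htop' _ _ hlt hhhom
    rw [mul_comm M' B']
    exact Ideal.mul_mem_mul hhB hXiM
  · -- m'.degree = d : h ∈ (B' : M') = (M'B' : M'), so h * X i ∈ M'B'
    have hhcolon : h ∈ Submodule.colon
        (B' : Submodule (MvPolynomial (Fin n) k) (MvPolynomial (Fin n) k)) M' := by
      rw [Submodule.mem_colon]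
      intro p hp
      rw [hM'] at hp
      induction hp using Submodule.span_induction with
      | mem x hx =>
        obtain ⟨j, rfl⟩ := hx
        have : (h * X j).IsHomogeneous (m'.degree + 1) := hhhom.mul (isHomogeneous_X _ _)
        exact htop' _ _ (by omega) this
      | zero => simp
      | add x y _ _ hx hy => rw [smul_add]; exact Ideal.add_mem _ hx hy
      | smul c x _ hx => rw [smul_comm]; exact Ideal.mul_mem_left _ _ hx
    rw [heq, Submodule.mem_colon] at hhcolon
    exact hhcolon (X i) hXiM
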